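/- Let s, t ≥ 1, a ∈ [t], and let K, K' be s×s block matrices over F_q whose blocks are r×1 column vectors, with K'(i,j) = 0 whenever i ≠ j (block diagonal). For g ∈ [s], with R_{a,g} = I_{s^{t-a-1}} ⊗ e_g ⊗ I_{s^a}, if K'(i,i) = K(i, g ⊕_s i) for all i ∈ [s], then the ℓ̃ × ℓ̃-block computation blkdiag over i ∈ [s] of (R_{a,i} ⊗ I_r)·Φ_{t,a}(K)·R_{a,g⊕_s i}^T equals Φ_{t-1, t-1}(blkdiag(K(i, g⊕_s i) : i ∈ [s])) — that is, extracting the rows with digit i and columns with digit g⊕_s i from the blow-up of K and stacking diagonally yields the blow-up (at position t-1 with t-1 levels) of the block-diagonal kernel with diagonal entries K(i, g⊕_s i). -/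

import Mathlib

open Matrix

/-- The row-selection matrix `R_{a,g}` (for `t = m+1` levels): it selects the rows of
`[s^t]` (indexed by their base-`s` digit strings) whose `a`-th digit equals `g`. -/
def Rsel {F : Type*} [Field F] {s m : ℕ} (a : Fin (m + 1)) (g : Fin s) :
    Matrix (Fin m → Fin s) (Fin (m + 1) → Fin s) F :=
  Matrix.of fun f f' => if f' = Fin.insertNth a g f then 1 else 0

/-- `R_{a,g} ⊗ I_r`. -/
def RselKron {F : Type*} [Field F] {s m r : ℕ} (a : Fin (m + 1)) (g : Fin s) :
    Matrix ((Fin m → Fin s) × Fin r) ((Fin (m + 1) → Fin s) × Fin r) F :=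
  Matrix.of fun p q => Rsel a g p.1 q.1 * (if p.2 = q.2 then 1 else 0)

/-- The blow-up `Φ_{t,a}(K)` of an `s × s` block matrix `K` whose blocks are
column vectors of length `r`. -/
def blowUpVec {F : Type*} [Field F] {s r : ℕ} {t : ℕ} (a : Fin t)
    (K : Fin s → Fin s → Fin r → F) :
    Matrix ((Fin t → Fin s) × Fin r) (Fin t → Fin s) F :=
  Matrix.of fun p q =>
    if ∀ z, z ≠ a → p.1 z = q z then K (p.1 a) (q a) p.2 else 0

/-- Entrywise: the block-diagonal stacking (over `i ∈ [s]`) of the matrices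
`(R_{a,i} ⊗ I_r)·Φ_{t,a}(K)·R_{a,g⊕_s i}ᵀ` coincides with the blow-up, at the last
digit position of `t` levels, of the block-diagonal kernel `K'` whose diagonal blocks
are `K' i i = K i (g ⊕_s i)`.  Rows `(i, (f, ρ))` and columns `(i', f')` of the stacked
matrix correspond to the digit strings `snoc f i` and `snoc f' i'`. -/
theorem stmt19 {F : Type*} [Field F] {s r m : ℕ} (hs : 0 < s)
    (a : Fin (m + 1)) (g : Fin s)
    (K K' : Fin s → Fin s → Fin r → F)
    (hdiag : ∀ i j, i ≠ j → K' i j = 0)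
    (hK' : ∀ i, K' i i = K i (g + i)) :
    ∀ (i i' : Fin s) (f f' : Fin m → Fin s) (ρ : Fin r),
      (if i = i' then
          (((RselKron a i * blowUpVec a K : Matrix ((Fin m → Fin s) × Fin r) (Fin (m + 1) → Fin s) F) * (Rsel (F := F) a (g + i))ᵀ :
            Matrix ((Fin m → Fin s) × Fin r) (Fin m → Fin s) F)) (f, ρ) f'
        else 0) =
      blowUpVec (Fin.last m) K' (Fin.snoc f i, ρ) (Fin.snoc f' i') := by
  intro i i' f f' ρ
  have h2 : ∀ (p : (Fin m → Fin s) × Fin r) (q : Fin m → Fin s),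
      ((RselKron a i * blowUpVec a K : Matrix ((Fin m → Fin s) × Fin r) (Fin (m + 1) → Fin s) F) * (Rsel (F := F) a (g + i))ᵀ :
          Matrix ((Fin m → Fin s) × Fin r) (Fin m → Fin s) F) p q
        = blowUpVec a K (Fin.insertNth a i p.1, p.2) (Fin.insertNth a (g + i) q) := by
    intro p q
    rw [Matrix.mul_apply]
    simp only [Rsel, Matrix.transpose_apply, Matrix.of_apply, mul_ite, mul_one, mul_zero]
    simp only [Finset.sum_ite_eq', Finset.mem_univ, if_pos]
    change (∑ j, RselKron (F := F) a i p j * blowUpVec a K j (Fin.insertNth a (g + i) q)) = _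
    rw [Fintype.sum_prod_type]
    simp only [RselKron, Rsel, Matrix.of_apply, ite_mul, one_mul, zero_mul]
    rw [Finset.sum_comm]
    simp only [Finset.sum_ite_eq, Finset.sum_ite_eq', Finset.mem_univ, if_pos]
  rw [h2]
  have hins : (∀ z, z ≠ a → (Fin.insertNth a i f : Fin (m+1) → Fin s) z = (Fin.insertNth a (g + i) f' : Fin (m+1) → Fin s) z) ↔ f = f' := by
    constructor
    · intro h
      funext w
      have := h (a.succAbove w) (Fin.succAbove_ne a w)
      simpa using this
    · rintro rfl z hz
      obtain ⟨w, rfl⟩ := Fin.exists_succAbove_eq hz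
      simp
  have hsnoc : (∀ z, z ≠ Fin.last m →
      (Fin.snoc f i : Fin (m + 1) → Fin s) z = (Fin.snoc f' i' : Fin (m + 1) → Fin s) z) ↔ f = f' := by
    constructor
    · intro h
      funext w
      have := h w.castSucc (Fin.castSucc_lt_last w).ne
      simpa using this
    · rintro rfl z hz
      obtain ⟨w, rfl⟩ := Fin.exists_castSucc_eq.2 hz
      simp
  simp only [blowUpVec, Matrix.of_apply, Fin.insertNth_apply_same, Fin.snoc_last]
  rcases eq_or_ne i i' with rfl | hne
  · rw [if_pos rfl]
    by_cases hf : f = f'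
    · rw [if_pos (hins.2 hf), if_pos (hsnoc.2 hf), hK']
    · rw [if_neg (fun h => hf (hins.1 h)), if_neg (fun h => hf (hsnoc.1 h))]
  · rw [if_neg hne]
    by_cases hf : f = f'
    · rw [if_pos (hsnoc.2 hf), hdiag i i' hne]
      rfl
    · rw [if_neg (fun h => hf (hsnoc.1 h))]
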